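/- Conditioning by steps: let X_1,...,X_n be independent real random variables with P(X_n ≤ ... ≤ X_1) > 0. Fix k ∈ {1,...,n} and let Y_k be a random variable, independent of (X_1,...,X_{k−1}), with the law of X_k conditioned on X_n ≤ ... ≤ X_k. Then P(Y_k ≤ X_{k−1} ≤ ... ≤ X_1) > 0 and the law of (X_k,...,X_1) conditioned on X_n ≤ ... ≤ X_1 equals the law of (Y_k, X_{k−1},...,X_1) conditioned on Y_k ≤ X_{k−1} ≤ ... ≤ X_1. -/

import Mathlib

open MeasureTheory ProbabilityTheory Filter Set
open scoped Topology ProbabilityTheory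

lemma aux_map_cond {α β : Type*} [MeasurableSpace α] [MeasurableSpace β]
    (μ : Measure α) {Z : α → β} (hZ : Measurable Z) {S : Set β} (hS : MeasurableSet S) :
    Measure.map Z (μ[|Z ⁻¹' S]) = (Measure.map Z μ)[|S] := by
  simp only [ProbabilityTheory.cond]
  rw [Measure.map_smul, Measure.restrict_map hZ hS, Measure.map_apply hZ hS]

lemma aux_cond_map_eq {Ω β γ : Type*} [MeasurableSpace Ω] [MeasurableSpace β] [MeasurableSpace γ]
    (P : Measure Ω) [IsProbabilityMeasure P] {T : Ω → β} {H : Ω → γ}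
    (hT : Measurable T) (hH : Measurable H) (hTH : IndepFun T H P)
    {sB : Set β} (hsB : MeasurableSet sB) (hB : P (T ⁻¹' sB) ≠ 0) :
    Measure.map H (P[|T ⁻¹' sB]) = Measure.map H P := by
  have hBm : MeasurableSet (T ⁻¹' sB) := hT hsB
  ext v hv
  rw [Measure.map_apply hH hv, Measure.map_apply hH hv, cond_apply hBm,
    hTH.measure_inter_preimage_eq_mul sB v hsB hv, ← mul_assoc,
    ENNReal.inv_mul_cancel hB (measure_ne_top _ _), one_mul]

lemma aux_indep_cond {Ω β γ : Type*} [MeasurableSpace Ω] [MeasurableSpace β] [MeasurableSpace γ]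
    (P : Measure Ω) [IsProbabilityMeasure P] {T : Ω → β} {H : Ω → γ}
    (hT : Measurable T) (hTH : IndepFun T H P)
    {sB : Set β} (hsB : MeasurableSet sB) (hB : P (T ⁻¹' sB) ≠ 0) :
    IndepFun T H (P[|T ⁻¹' sB]) := by
  have hBm : MeasurableSet (T ⁻¹' sB) := hT hsB
  rw [indepFun_iff_measure_inter_preimage_eq_mul]
  intro u v hu hv
  rw [cond_apply hBm, cond_apply hBm, cond_apply hBm]
  have h1 : T ⁻¹' sB ∩ (T ⁻¹' u ∩ H ⁻¹' v) = T ⁻¹' (sB ∩ u) ∩ H ⁻¹' v := by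
    rw [Set.preimage_inter]; rw [← Set.inter_assoc]
  have h2 : T ⁻¹' sB ∩ T ⁻¹' u = T ⁻¹' (sB ∩ u) := (Set.preimage_inter).symm
  rw [h1, h2, hTH.measure_inter_preimage_eq_mul _ _ (hsB.inter hu) hv,
    hTH.measure_inter_preimage_eq_mul _ _ hsB hv]
  have key : ∀ a b c : ENNReal, a ≠ 0 → a ≠ ⊤ → a⁻¹ * (b * c) = a⁻¹ * b * (a⁻¹ * (a * c)) := by
    intro a b c h0 ht
    rw [show a⁻¹ * b * (a⁻¹ * (a * c)) = (a⁻¹ * a) * (a⁻¹ * (b * c)) by ring,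
      ENNReal.inv_mul_cancel h0 ht, one_mul]
  exact key _ _ _ hB (measure_ne_top _ _)

lemma aux_ms_le {ι : Type*} [Countable ι] {α : Type*} [MeasurableSpace α]
    {f g : ι → α → ℝ} (hf : ∀ i, Measurable (f i)) (hg : ∀ i, Measurable (g i))
    (p : ι → Prop) : MeasurableSet {a | ∀ i, p i → g i a ≤ f i a} := by
  have : {a | ∀ i, p i → g i a ≤ f i a} = ⋂ i, {a | p i → g i a ≤ f i a} := by
    ext a; simp [Set.mem_iInter]
  rw [this]
  refine MeasurableSet.iInter fun i => ?_
  by_cases h : p i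
  · simp only [h, true_implies]
    exact measurableSet_le (hg i) (hf i)
  · simp only [h, false_implies, Set.setOf_true]
    exact MeasurableSet.univ

theorem conditioning_by_steps
    (Ω : Type*) [MeasurableSpace Ω] (P : Measure Ω) [IsProbabilityMeasure P]
    (n : ℕ) (X : Fin n → Ω → ℝ) (hXmeas : ∀ i, Measurable (X i))
    (hXindep : iIndepFun X P)
    (hpos : 0 < P {ω | ∀ i j : Fin n, i ≤ j → X j ω ≤ X i ω})
    (k : ℕ) (hk : 1 ≤ k) (hkn : k ≤ n)
    (Yk : Ω → ℝ) (hYkmeas : Measurable Yk)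
    (hYklaw : Measure.map Yk P =
      Measure.map (fun ω => X ⟨k - 1, by omega⟩ ω)
        (P[|{ω | ∀ i j : Fin n, k - 1 ≤ (i : ℕ) → i ≤ j → X j ω ≤ X i ω}]))
    (hYkindep : IndepFun Yk
      (fun ω => fun i : Fin (k - 1) => X ⟨(i : ℕ), by have := i.isLt; omega⟩ ω) P) :
    0 < P {ω | (∀ i j : Fin n, i ≤ j → (j : ℕ) + 2 ≤ k → X j ω ≤ X i ω) ∧
          ∀ j : Fin n, (j : ℕ) + 2 ≤ k → Yk ω ≤ X j ω} ∧
    Measure.map (fun ω => fun i : Fin k => X ⟨k - 1 - (i : ℕ), by omega⟩ ω)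
        (P[|{ω | ∀ i j : Fin n, i ≤ j → X j ω ≤ X i ω}]) =
      Measure.map
        (fun ω => fun i : Fin k =>
          if (i : ℕ) = 0 then Yk ω else X ⟨k - 1 - (i : ℕ), by omega⟩ ω)
        (P[|{ω | (∀ i j : Fin n, i ≤ j → (j : ℕ) + 2 ≤ k → X j ω ≤ X i ω) ∧
              ∀ j : Fin n, (j : ℕ) + 2 ≤ k → Yk ω ≤ X j ω}]) := by
  classical
  -- names for the three events
  set Aset : Set Ω := {ω | ∀ i j : Fin n, i ≤ j → X j ω ≤ X i ω} with hAdef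
  set Bset : Set Ω := {ω | ∀ i j : Fin n, k - 1 ≤ (i : ℕ) → i ≤ j → X j ω ≤ X i ω} with hBdef
  set Cset : Set Ω := {ω | (∀ i j : Fin n, i ≤ j → (j : ℕ) + 2 ≤ k → X j ω ≤ X i ω) ∧
          ∀ j : Fin n, (j : ℕ) + 2 ≤ k → Yk ω ≤ X j ω} with hCdef
  -- tail and head vectors
  set Sfin : Finset (Fin n) := Finset.univ.filter (fun i => k - 1 ≤ (i : ℕ)) with hSfdef
  set Tfin : Finset (Fin n) := Finset.univ.filter (fun i => (i : ℕ) < k - 1) with hTfdef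
  set T : Ω → (↥Sfin → ℝ) := fun ω (i : ↥Sfin) => X i ω with hTdef
  set Hd : Ω → (Fin (k - 1) → ℝ) :=
    fun ω => fun i : Fin (k - 1) => X ⟨(i : ℕ), by have := i.isLt; omega⟩ ω with hHdef
  have hT : Measurable T := measurable_pi_lambda _ fun i => hXmeas _
  have hHd : Measurable Hd := measurable_pi_lambda _ fun i => hXmeas _
  -- independence of tail and head
  have hTH : IndepFun T Hd P := by
    have hdisj : Disjoint Sfin Tfin := by
      rw [Finset.disjoint_left]
      intro a ha hb
      rw [hSfdef, Finset.mem_filter] at ha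
      rw [hTfdef, Finset.mem_filter] at hb
      omega
    have h1 := hXindep.indepFun_finset Sfin Tfin hdisj hXmeas
    have hψ : Measurable (fun (t : ↥Tfin → ℝ) (i : Fin (k - 1)) =>
        t ⟨⟨(i : ℕ), by have := i.isLt; omega⟩, by
          rw [hTfdef, Finset.mem_filter]; exact ⟨Finset.mem_univ _, i.isLt⟩⟩) :=
      measurable_pi_lambda _ fun i => measurable_pi_apply _
    exact h1.comp measurable_id hψ
  -- the tail event
  set sB : Set (↥Sfin → ℝ) :=
    {t | ∀ p : ↥Sfin × ↥Sfin, (p.1 : Fin n) ≤ (p.2 : Fin n) → t p.2 ≤ t p.1} with hsBdef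
  have hsB : MeasurableSet sB :=
    aux_ms_le (ι := ↥Sfin × ↥Sfin) (α := ↥Sfin → ℝ)
      (f := fun p t => t p.1) (g := fun p t => t p.2)
      (fun p => measurable_pi_apply _) (fun p => measurable_pi_apply _) _
  have hBeq : Bset = T ⁻¹' sB := by
    ext ω
    simp only [hBdef, hsBdef, hTdef, Set.mem_setOf_eq, Set.mem_preimage]
    constructor
    · intro h p hij
      exact h p.1 p.2 (Finset.mem_filter.mp p.1.2).2 hij
    · intro h i j hki hij
      have hkj : k - 1 ≤ (j : ℕ) := le_trans hki hij
      exact h (⟨i, Finset.mem_filter.mpr ⟨Finset.mem_univ _, hki⟩⟩,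
        ⟨j, Finset.mem_filter.mpr ⟨Finset.mem_univ _, hkj⟩⟩) hij
  have hBm : MeasurableSet Bset := by rw [hBeq]; exact hT hsB
  -- P Bset ≠ 0
  have hAsub : Aset ⊆ Bset := fun ω h i j _ hij => h i j hij
  have hBpos : 0 < P Bset := lt_of_lt_of_le hpos (measure_mono (μ := P) hAsub)
  have hBne : P Bset ≠ 0 := hBpos.ne'
  -- the pair maps
  set Xk : Ω → ℝ := fun ω => X ⟨k - 1, by omega⟩ ω with hXkdef
  have hXk : Measurable Xk := hXmeas _
  set Z : Ω → ℝ × (Fin (k - 1) → ℝ) := fun ω => (Xk ω, Hd ω) with hZdef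
  set W : Ω → ℝ × (Fin (k - 1) → ℝ) := fun ω => (Yk ω, Hd ω) with hWdef
  have hZ : Measurable Z := hXk.prodMk hHd
  have hW : Measurable W := hYkmeas.prodMk hHd
  set S : Set (ℝ × (Fin (k - 1) → ℝ)) :=
    {p | (∀ q : Fin (k - 1) × Fin (k - 1), q.1 ≤ q.2 → p.2 q.2 ≤ p.2 q.1) ∧
      ∀ j : Fin (k - 1), p.1 ≤ p.2 j} with hSdef
  have hSmeas : MeasurableSet S := by
    have h1 : MeasurableSet {p : ℝ × (Fin (k - 1) → ℝ) |
        ∀ q : Fin (k - 1) × Fin (k - 1), q.1 ≤ q.2 → p.2 q.2 ≤ p.2 q.1} :=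
      aux_ms_le (ι := Fin (k - 1) × Fin (k - 1)) (α := ℝ × (Fin (k - 1) → ℝ))
        (f := fun q p => p.2 q.1) (g := fun q p => p.2 q.2)
        (fun q => (measurable_pi_apply _).comp measurable_snd)
        (fun q => (measurable_pi_apply _).comp measurable_snd) _
    have h2 : MeasurableSet {p : ℝ × (Fin (k - 1) → ℝ) | ∀ j : Fin (k - 1), p.1 ≤ p.2 j} := by
      have h2' := aux_ms_le (ι := Fin (k - 1)) (α := ℝ × (Fin (k - 1) → ℝ))
        (f := fun j p => p.2 j) (g := fun j p => p.1)
        (fun j => (measurable_pi_apply _).comp measurable_snd)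
        (fun j => measurable_fst) (fun _ => True)
      simpa using h2'
    exact h1.inter h2
  have hPBne : P (T ⁻¹' sB) ≠ 0 := by rw [← hBeq]; exact hBne
  -- A = B ∩ Z⁻¹' S
  have hAeq : Aset = Bset ∩ Z ⁻¹' S := by
    ext ω
    simp only [hAdef, hBdef, hSdef, hZdef, hHdef, hXkdef, Set.mem_inter_iff, Set.mem_setOf_eq,
      Set.mem_preimage]
    constructor
    · intro h
      refine ⟨fun i j _ hij => h i j hij, fun q hq => ?_, fun j => ?_⟩
      · have h1 : (q.1 : ℕ) < k - 1 := q.1.isLt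
        have h2 : (q.2 : ℕ) < k - 1 := q.2.isLt
        have hq' : (q.1 : ℕ) ≤ (q.2 : ℕ) := hq
        exact h ⟨(q.1 : ℕ), by omega⟩ ⟨(q.2 : ℕ), by omega⟩ hq'
      · have h1 : (j : ℕ) < k - 1 := j.isLt
        exact h ⟨(j : ℕ), by omega⟩ ⟨k - 1, by omega⟩ (by
          show (j : ℕ) ≤ k - 1; omega)
    · rintro ⟨hB', hS1, hS2⟩ i j hij
      by_cases hi : k - 1 ≤ (i : ℕ)
      · exact hB' i j hi hij
      · have hi' : (i : ℕ) < k - 1 := by omega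
        by_cases hj : (j : ℕ) < k - 1
        · have hij' : (i : ℕ) ≤ (j : ℕ) := hij
          exact hS1 (⟨(i : ℕ), hi'⟩, ⟨(j : ℕ), hj⟩) hij'
        · have hj' : k - 1 ≤ (j : ℕ) := by omega
          have h1 : X j ω ≤ X ⟨k - 1, by omega⟩ ω :=
            hB' ⟨k - 1, by omega⟩ j (le_refl _) hj'
          have h2 := hS2 ⟨(i : ℕ), hi'⟩
          exact le_trans h1 h2
  -- C = W⁻¹' S
  have hCeq : Cset = W ⁻¹' S := by
    ext ω
    simp only [hCdef, hSdef, hWdef, hHdef, Set.mem_setOf_eq, Set.mem_preimage]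
    constructor
    · rintro ⟨h1, h2⟩
      refine ⟨fun q hq => ?_, fun j => ?_⟩
      · have hq1 : (q.1 : ℕ) < k - 1 := q.1.isLt
        have hq2 : (q.2 : ℕ) < k - 1 := q.2.isLt
        have hq' : (q.1 : ℕ) ≤ (q.2 : ℕ) := hq
        exact h1 ⟨(q.1 : ℕ), by omega⟩ ⟨(q.2 : ℕ), by omega⟩ hq' (by
          show ((⟨(q.2 : ℕ), by omega⟩ : Fin n) : ℕ) + 2 ≤ k; simp; omega)
      · have hj1 : (j : ℕ) < k - 1 := j.isLt
        exact h2 ⟨(j : ℕ), by omega⟩ (by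
          show ((⟨(j : ℕ), by omega⟩ : Fin n) : ℕ) + 2 ≤ k; simp; omega)
    · rintro ⟨h1, h2⟩
      refine ⟨fun i j hij hjk => ?_, fun j hjk => ?_⟩
      · have hij' : (i : ℕ) ≤ (j : ℕ) := hij
        have hik : (i : ℕ) < k - 1 := by omega
        exact h1 (⟨(i : ℕ), hik⟩, ⟨(j : ℕ), by omega⟩) hij'
      · exact h2 ⟨(j : ℕ), by omega⟩
  have hCm : MeasurableSet Cset := by rw [hCeq]; exact hW hSmeas
  -- the joint law identity
  haveI : IsProbabilityMeasure (P[|T ⁻¹' sB]) := cond_isProbabilityMeasure hPBne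
  have hIndepXkHd : IndepFun Xk Hd (P[|T ⁻¹' sB]) := by
    have h := aux_indep_cond P hT hTH hsB hPBne
    exact h.comp (measurable_pi_apply
      (⟨⟨k - 1, by omega⟩, Finset.mem_filter.mpr ⟨Finset.mem_univ _, le_refl _⟩⟩ : ↥Sfin))
      measurable_id
  have hmapHd : Measure.map Hd (P[|T ⁻¹' sB]) = Measure.map Hd P :=
    aux_cond_map_eq P hT hHd hTH hsB hPBne
  have hcondB : P[|Bset] = P[|T ⁻¹' sB] := by rw [hBeq]
  have hjoint : Measure.map Z (P[|Bset]) = Measure.map W P := by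
    rw [hcondB]
    have h1 : Measure.map Z (P[|T ⁻¹' sB]) =
        (Measure.map Xk (P[|T ⁻¹' sB])).prod (Measure.map Hd (P[|T ⁻¹' sB])) :=
      (indepFun_iff_map_prod_eq_prod_map_map hXk.aemeasurable hHd.aemeasurable).mp hIndepXkHd
    have h2 : Measure.map W P = (Measure.map Yk P).prod (Measure.map Hd P) :=
      (indepFun_iff_map_prod_eq_prod_map_map hYkmeas.aemeasurable hHd.aemeasurable).mp hYkindep
    rw [h1, h2, hmapHd, hYklaw, hcondB]
  -- positivity
  have hPC : P Cset = (P Bset)⁻¹ * P Aset := by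
    rw [hCeq, ← Measure.map_apply hW hSmeas, ← hjoint, hcondB, ← hcondB,
      Measure.map_apply hZ hSmeas, cond_apply hBm, ← hAeq]
  have hCpos : 0 < P Cset := by
    rw [hPC]
    exact ENNReal.mul_pos (ENNReal.inv_ne_zero.mpr (measure_ne_top _ _)) hpos.ne'
  refine ⟨hCpos, ?_⟩
  -- the final law identity
  set g : ℝ × (Fin (k - 1) → ℝ) → (Fin k → ℝ) :=
    fun p i => if h : (i : ℕ) = 0 then p.1
      else p.2 ⟨k - 1 - (i : ℕ), by have := i.isLt; omega⟩ with hgdef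
  have hg : Measurable g := by
    refine measurable_pi_lambda _ fun i => ?_
    by_cases h : (i : ℕ) = 0
    · simp only [hgdef, dif_pos h]
      exact measurable_fst
    · simp only [hgdef, dif_neg h]
      exact (measurable_pi_apply _).comp measurable_snd
  have hgZ : (fun ω => fun i : Fin k => X ⟨k - 1 - (i : ℕ), by omega⟩ ω) = g ∘ Z := by
    funext ω i
    by_cases h : (i : ℕ) = 0
    · simp only [Function.comp_apply, hgdef, dif_pos h, hZdef, hXkdef, h, Nat.sub_zero]
      rfl
    · simp only [Function.comp_apply, hgdef, dif_neg h, hZdef, hHdef]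
  have hgW : (fun ω => fun i : Fin k =>
      if (i : ℕ) = 0 then Yk ω else X ⟨k - 1 - (i : ℕ), by omega⟩ ω) = g ∘ W := by
    funext ω i
    by_cases h : (i : ℕ) = 0
    · simp only [Function.comp_apply, hgdef, dif_pos h, hWdef, if_pos h]
    · simp only [Function.comp_apply, hgdef, dif_neg h, hWdef, hHdef, if_neg h]
  rw [hgZ, hgW]
  rw [show P[|Aset] = (P[|Bset])[|Z ⁻¹' S] by
    rw [hAeq, ← cond_cond_eq_cond_inter hBm (hZ hSmeas) P]]
  rw [← Measure.map_map hg hZ, aux_map_cond _ hZ hSmeas, hjoint,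
    ← aux_map_cond P hW hSmeas, Measure.map_map hg hW, hCeq]
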